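/- Let d ≥ 2 and n ≥ 1 be integers and r ∈ (0,1). For every α ∈ {0,…,n−1}^d and every x in the closed cube ∏_{j=1}^d [α_j/n, (α_j + r)/n], we have ‖H^r(x) − α/n‖₂ ≤ (1−r)·√d·n^{−1}, where α/n = (α_1/n, …, α_d/n) is the lower corner grid point of the cube. -/

import Mathlib

/-- `h` is affine on the interval `[a, b]`. -/
def AffineOn (h : ℝ → ℝ) (a b : ℝ) : Prop :=
  ∃ m c : ℝ, ∀ x ∈ Set.Icc a b, h x = m * x + c

/-- `h` is the continuous piecewise-linear function `h^r` from the paper. -/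
def IsHr (n : ℕ) (r : ℝ) (h : ℝ → ℝ) : Prop :=
  Continuous h ∧
  (∀ x : ℝ, x ∉ Set.Icc (0:ℝ) 1 → h x = x) ∧
  (∀ j : ℕ, j ≤ n → h ((j : ℝ) / n) = (j : ℝ) / n) ∧
  (∀ j : ℕ, j < n → h (((j : ℝ) + r) / n) = ((j : ℝ) + 1 - r) / n) ∧
  (∀ j : ℕ, j < n → AffineOn h ((j : ℝ) / n) (((j : ℝ) + r) / n)) ∧
  (∀ j : ℕ, j < n → AffineOn h (((j : ℝ) + r) / n) (((j : ℝ) + 1) / n))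

/-- The coordinatewise map `H^r : ℝ^d → ℝ^d`. -/
noncomputable def Hmap (d : ℕ) (h : ℝ → ℝ) (x : EuclideanSpace ℝ (Fin d)) :
    EuclideanSpace ℝ (Fin d) :=
  WithLp.toLp 2 (fun i => h (x i))

/-- The uniform grid point `x^α = α/n` of `[0,1]^d`. -/
noncomputable def gridPoint (d n : ℕ) (α : Fin d → Fin n) : EuclideanSpace ℝ (Fin d) :=
  WithLp.toLp 2 (fun i => (α i : ℝ) / n)

/-- On each cube `∏_j [α_j/n, (α_j+r)/n]`, the map `H^r` stays within distance
`(1−r)√d/n` of the grid point `α/n`. -/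
theorem Hr_close_to_grid_on_subcube (d n : ℕ) (hd : 2 ≤ d) (hn : 1 ≤ n)
    (r : ℝ) (hr : r ∈ Set.Ioo (0:ℝ) 1) (h : ℝ → ℝ) (hh : IsHr n r h)
    (α : Fin d → Fin n) (x : EuclideanSpace ℝ (Fin d))
    (hx : ∀ j : Fin d, x j ∈ Set.Icc ((α j : ℝ) / n) (((α j : ℝ) + r) / n)) :
    ‖Hmap d h x - gridPoint d n α‖ ≤ (1 - r) * Real.sqrt d / n := by
  obtain ⟨hr0, hr1⟩ := hr
  have hn0 : (0:ℝ) < n := by exact_mod_cast hn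
  obtain ⟨_, _, hgrid, hmid, haff, _⟩ := hh
  -- coordinatewise bound
  have key : ∀ i : Fin d, |h (x i) - (α i : ℝ) / n| ≤ (1 - r) / n := by
    intro i
    have hjn : (α i : ℕ) < n := (α i).2
    obtain ⟨m, c, hmc⟩ := haff (α i) hjn
    have hab : ((α i : ℕ) : ℝ) / n ≤ (((α i : ℕ) : ℝ) + r) / n := by
      gcongr
      linarith
    have hma : m * (((α i : ℕ) : ℝ) / n) + c = ((α i : ℕ) : ℝ) / n := by
      rw [← hmc _ ⟨le_refl _, hab⟩]; exact hgrid (α i) hjn.le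
    have hmb : m * ((((α i : ℕ) : ℝ) + r) / n) + c = (((α i : ℕ) : ℝ) + 1 - r) / n := by
      rw [← hmc _ ⟨hab, le_refl _⟩]; exact hmid (α i) hjn
    obtain ⟨hx1, hx2⟩ := hx i
    have hxv : h (x i) = m * (x i) + c := hmc _ ⟨hx1, hx2⟩
    have hdiff : ((((α i : ℕ) : ℝ)) + 1 - r) / n - (((α i : ℕ) : ℝ)) / n = (1 - r) / n := by
      field_simp
      ring
    have hsplit : m * ((((α i : ℕ) : ℝ) + r) / n)
        = m * (((α i : ℕ) : ℝ) / n) + m * (r / n) := by ring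
    have hm : m * (r / n) = (1 - r) / n := by linarith
    have hm0 : 0 ≤ m := by
      have hrn : (0:ℝ) < r / n := div_pos hr0 hn0
      have h1rn : (0:ℝ) ≤ (1 - r) / n := div_nonneg (by linarith) hn0.le
      nlinarith
    rw [hxv, abs_le]
    constructor
    · have := mul_le_mul_of_nonneg_left hx1 hm0
      have h1rn : (0:ℝ) ≤ (1 - r) / n := div_nonneg (by linarith) hn0.le
      linarith
    · have := mul_le_mul_of_nonneg_left hx2 hm0
      linarith
  -- norm bound
  have hnorm : ‖Hmap d h x - gridPoint d n α‖
      = Real.sqrt (∑ i, (h (x i) - (α i : ℝ) / n) ^ 2) := by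
    rw [EuclideanSpace.norm_eq]
    congr 1
    apply Finset.sum_congr rfl
    intro i _
    rw [Real.norm_eq_abs, sq_abs]
    rfl
  rw [hnorm]
  have hbound : (∑ i, (h (x i) - (α i : ℝ) / n) ^ 2) ≤ d * ((1 - r) / n) ^ 2 := by
    calc (∑ i, (h (x i) - (α i : ℝ) / n) ^ 2)
        ≤ ∑ _i : Fin d, ((1 - r) / n) ^ 2 := by
          apply Finset.sum_le_sum
          intro i _
          rw [← sq_abs]
          exact pow_le_pow_left₀ (abs_nonneg _) (key i) 2
      _ = d * ((1 - r) / n) ^ 2 := by simp [Finset.sum_const]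
  have h1rn : (0:ℝ) ≤ (1 - r) / n := div_nonneg (by linarith) hn0.le
  calc Real.sqrt (∑ i, (h (x i) - (α i : ℝ) / n) ^ 2)
      ≤ Real.sqrt (d * ((1 - r) / n) ^ 2) := Real.sqrt_le_sqrt hbound
    _ = (1 - r) * Real.sqrt d / n := by
        rw [Real.sqrt_mul (by positivity), Real.sqrt_sq h1rn]
        ring
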